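/- Let Y be a finite nonempty set and let D be a set of extended real variables on Y containing all bounded below ones. A map E̅ : D → ℝ̄ is an upper expectation on D if and only if it satisfies (E1)–(E4) together with (E13): E̅((+∞)·f) = (+∞)·E̅(f) for every non-negative bounded below extended real variable f on Y, where multiplication by +∞ is given by (+∞)·x := +∞ if x > 0 and (+∞)·0 := 0, applied pointwise to f on the left-hand side and to the value E̅(f) on the right-hand side. -/

import Mathlib

open Filter Topology

noncomputable section

/-- Addition on the extended reals with the convention `(+∞) + (−∞) = (−∞) + (+∞) = +∞`. -/
def eadd (a b : EReal) : EReal := if a = ⊤ ∨ b = ⊤ then ⊤ else a + b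

/-- An extended real variable is bounded below. -/
def BddBelowF {Y : Type*} (f : Y → EReal) : Prop := ∃ M : ℝ, ∀ y, (M : EReal) ≤ f y

/-- (E1): constants are preserved. -/
def UE1 {Y : Type*} (E : (Y → EReal) → EReal) : Prop :=
  ∀ c : ℝ, E (fun _ => (c : EReal)) = (c : EReal)

/-- (E2): sub-additivity on bounded below variables. -/
def UE2 {Y : Type*} (E : (Y → EReal) → EReal) : Prop :=
  ∀ f g : Y → EReal, BddBelowF f → BddBelowF g →
    E (fun y => eadd (f y) (g y)) ≤ eadd (E f) (E g)

/-- (E3): positive homogeneity on bounded below variables. -/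
def UE3 {Y : Type*} (E : (Y → EReal) → EReal) : Prop :=
  ∀ l : ℝ, 0 < l → ∀ f : Y → EReal, BddBelowF f →
    E (fun y => (l : EReal) * f y) = (l : EReal) * E f

/-- (E4): monotonicity on bounded below variables. -/
def UE4 {Y : Type*} (E : (Y → EReal) → EReal) : Prop :=
  ∀ f g : Y → EReal, BddBelowF f → BddBelowF g → (∀ y, f y ≤ g y) → E f ≤ E g

/-- (E5): continuity with respect to non-decreasing sequences of non-negative variables. -/
def UE5 {Y : Type*} (E : (Y → EReal) → EReal) : Prop :=
  ∀ (fs : ℕ → Y → EReal) (f : Y → EReal),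
    (∀ n y, 0 ≤ fs n y) → (∀ n y, fs n y ≤ fs (n + 1) y) →
    (∀ y, Tendsto (fun n => fs n y) atTop (𝓝 (f y))) →
    Tendsto (fun n => E (fs n)) atTop (𝓝 (E f))

/-- An upper expectation: a map satisfying (E1)–(E5). -/
def IsUpperExpectation {Y : Type*} (E : (Y → EReal) → EReal) : Prop :=
  UE1 E ∧ UE2 E ∧ UE3 E ∧ UE4 E ∧ UE5 E

lemma eadd_zero' (a : EReal) : eadd a 0 = a := by
  unfold eadd
  split
  · rcases ‹_ ∨ _› with h | h
    · exact h.symm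
    · simp at h
  · exact add_zero a

lemma eadd_top' (a : EReal) : eadd a ⊤ = ⊤ := by simp [eadd]

lemma le_eadd_self' {a b : EReal} (hb : 0 ≤ b) : a ≤ eadd a b := by
  unfold eadd; split
  · exact le_top
  · exact le_add_of_nonneg_right hb

lemma eadd_le_eadd_left' {a a' : EReal} (b : EReal) (h : a ≤ a') : eadd a b ≤ eadd a' b := by
  unfold eadd
  rcases eq_or_ne b ⊤ with rfl | hb
  · simp
  · rcases eq_or_ne a' ⊤ with rfl | ha'
    · simp
    · have ha : a ≠ ⊤ := fun e => ha' (top_le_iff.1 (e ▸ h))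
      simp only [ha, ha', hb, or_self, if_false]
      exact add_le_add_left h b

lemma tendsto_natmul' {a : EReal} (ha : 0 ≤ a) :
    Tendsto (fun n : ℕ => ((n : ℝ) : EReal) * a) atTop (𝓝 ((⊤ : EReal) * a)) := by
  rcases ha.eq_or_lt with h | h
  · simp only [← h, mul_zero]
    exact tendsto_const_nhds
  · rw [EReal.top_mul_of_pos h, EReal.tendsto_nhds_top_iff_real]
    intro c
    obtain ⟨m, hm, hma⟩ : ∃ m : ℝ, 0 < m ∧ (m : EReal) ≤ a := by
      rcases eq_or_ne a ⊤ with rfl | hne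
      · exact ⟨1, one_pos, le_top⟩
      · have hb : a ≠ ⊥ := (lt_of_le_of_lt bot_le h).ne'
        have hcoe : a = ((a.toReal : ℝ) : EReal) := (EReal.coe_toReal hne hb).symm
        refine ⟨a.toReal, ?_, hcoe.ge⟩
        have := h; rw [hcoe] at this; exact_mod_cast this
    have hmul : Tendsto (fun n : ℕ => (n : ℝ) * m) atTop atTop :=
      Tendsto.atTop_mul_const hm tendsto_natCast_atTop_atTop
    filter_upwards [hmul.eventually_gt_atTop c] with n hn
    calc (c : EReal) < (((n : ℝ) * m : ℝ) : EReal) := by exact_mod_cast hn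
      _ = ((n : ℝ) : EReal) * (m : EReal) := by rw [EReal.coe_mul]
      _ ≤ ((n : ℝ) : EReal) * a :=
        mul_le_mul_of_nonneg_left hma (by exact_mod_cast Nat.cast_nonneg n)

/-- for finite `Y`, a map on a domain `D` containing all bounded below
variables is an upper expectation if and only if it satisfies (E1)–(E4) together with (E13),
homogeneity with respect to multiplication by `+∞` on non-negative bounded below variables. -/
theorem stmt2 {Y : Type*} [Fintype Y] [Nonempty Y]
    (D : Set (Y → EReal)) (hD : ∀ f, BddBelowF f → f ∈ D)
    (E : (Y → EReal) → EReal) :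
    IsUpperExpectation E ↔
      (UE1 E ∧ UE2 E ∧ UE3 E ∧ UE4 E ∧
        ∀ f : Y → EReal, BddBelowF f → (∀ y, 0 ≤ f y) →
          E (fun y => (⊤ : EReal) * f y) = (⊤ : EReal) * E f) := by
  classical
  constructor
  · rintro ⟨h1, h2, h3, h4, h5⟩
    refine ⟨h1, h2, h3, h4, fun f hfb hf0 => ?_⟩
    have hEf0 : (0 : EReal) ≤ E f := by
      have h := h4 (fun _ => ((0 : ℝ) : EReal)) f ⟨0, fun y => le_refl _⟩ hfb
        (fun y => by simpa using hf0 y)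
      rwa [h1 0, EReal.coe_zero] at h
    have hfs := h5 (fun n y => ((n : ℝ) : EReal) * f y) (fun y => (⊤ : EReal) * f y)
      (fun n y => mul_nonneg (by exact_mod_cast Nat.cast_nonneg n) (hf0 y))
      (fun n y => mul_le_mul_of_nonneg_right
        (by exact_mod_cast Nat.cast_le.2 (Nat.le_succ n)) (hf0 y))
      (fun y => tendsto_natmul' (hf0 y))
    have heq : (fun n : ℕ => E (fun y => ((n : ℝ) : EReal) * f y)) =
        fun n : ℕ => ((n : ℝ) : EReal) * E f := by
      funext n
      match n with
      | 0 =>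
        have he : (fun y => (((0 : ℕ) : ℝ) : EReal) * f y) = fun _ => ((0 : ℝ) : EReal) := by
          funext y; simp
        rw [he, h1 0]; simp
      | Nat.succ k =>
        exact h3 _ (by positivity) f hfb
    rw [heq] at hfs
    exact tendsto_nhds_unique hfs (tendsto_natmul' hEf0)
  · rintro ⟨h1, h2, h3, h4, h13⟩
    refine ⟨h1, h2, h3, h4, ?_⟩
    intro fs f h0 hstep hlim
    have hmono : ∀ y, Monotone fun n => fs n y := fun y => monotone_nat_of_le_succ fun n => hstep n y
    have hle : ∀ n y, fs n y ≤ f y := fun n y =>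
      ge_of_tendsto (hlim y) (eventually_atTop.2 ⟨n, fun m hm => hmono y hm⟩)
    have hfs_b : ∀ n, BddBelowF (fs n) := fun n => ⟨0, fun y => by simpa using h0 n y⟩
    have hf0 : ∀ y, 0 ≤ f y := fun y => le_trans (h0 0 y) (hle 0 y)
    have hf_b : BddBelowF f := ⟨0, fun y => by simpa using hf0 y⟩
    have hEmono : Monotone fun n => E (fs n) :=
      fun n m hnm => h4 _ _ (hfs_b n) (hfs_b m) fun y => hmono y hnm
    have hnonnegE : ∀ g : Y → EReal, BddBelowF g → (∀ y, 0 ≤ g y) → 0 ≤ E g := by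
      intro g hgb hg0
      have h := h4 (fun _ => ((0 : ℝ) : EReal)) g ⟨0, fun y => le_refl _⟩ hgb
        (fun y => by simpa using hg0 y)
      rwa [h1 0, EReal.coe_zero] at h
    set L := ⨆ n, E (fs n) with hLdef
    have hLn : ∀ n, E (fs n) ≤ L := fun n => le_iSup (fun n => E (fs n)) n
    have hL0 : (0 : EReal) ≤ L := le_trans (hnonnegE _ (hfs_b 0) (h0 0)) (hLn 0)
    set g : Y → EReal := fun y => if f y = ⊤ then 1 else 0 with hgdef
    have hg0 : ∀ y, 0 ≤ g y := fun y => by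
      by_cases hy : f y = ⊤ <;> simp [hgdef, hy]
    have hgb : BddBelowF g := ⟨0, fun y => by simpa using hg0 y⟩
    have hEg0 : 0 ≤ E g := hnonnegE g hgb hg0
    have key : E f ≤ L := by
      rcases hEg0.eq_or_lt with hzero | hpos
      · -- E g = 0 case
        have hEg : E g = 0 := hzero.symm
        have hune : (Finset.univ : Finset Y).Nonempty := Finset.univ_nonempty
        set M : ℝ := max (Finset.univ.sup' hune fun y => (f y).toReal) 0 with hMdef
        have hM : ∀ y, f y ≠ ⊤ → f y ≤ (M : EReal) := by
          intro y hy
          have hb : f y ≠ ⊥ := (lt_of_lt_of_le EReal.bot_lt_zero (hf0 y)).ne'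
          calc f y = ((f y).toReal : EReal) := (EReal.coe_toReal hy hb).symm
            _ ≤ (M : EReal) := EReal.coe_le_coe_iff.2
              (le_trans (Finset.le_sup' (fun y => (f y).toReal) (Finset.mem_univ y))
                (le_max_left _ _))
        have hM0 : 0 ≤ M := le_max_right _ _
        set h : Y → EReal := fun y => min (f y) (M : EReal) with hhdef
        have hh0 : ∀ y, 0 ≤ h y := fun y => le_min (hf0 y) (by exact_mod_cast hM0)
        have hhb : BddBelowF h := ⟨0, fun y => by simpa using hh0 y⟩
        have htopg0 : ∀ y, 0 ≤ (⊤ : EReal) * g y := fun y => mul_nonneg le_top (hg0 y)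
        have step1 : E f ≤ E h := by
          have hpt : ∀ y, f y ≤ eadd (h y) ((⊤ : EReal) * g y) := by
            intro y
            by_cases hy : f y = ⊤
            · have : g y = 1 := if_pos hy
              rw [this, mul_one, eadd_top']; exact le_top
            · have hgy : g y = 0 := if_neg hy
              rw [hgy, mul_zero, eadd_zero']
              exact le_of_eq (min_eq_left (hM y hy)).symm
          have hmid : E f ≤ E (fun y => eadd (h y) ((⊤ : EReal) * g y)) :=
            h4 f _ hf_b ⟨0, fun y => le_trans (by simpa using hh0 y)
              (le_eadd_self' (htopg0 y))⟩ hpt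
          have h2' := h2 h (fun y => (⊤ : EReal) * g y) hhb
            ⟨0, fun y => by simpa using htopg0 y⟩
          have h13g := h13 g hgb hg0
          rw [hEg, mul_zero] at h13g
          calc E f ≤ _ := hmid
            _ ≤ eadd (E h) (E fun y => (⊤ : EReal) * g y) := h2'
            _ = eadd (E h) 0 := by rw [h13g]
            _ = E h := eadd_zero' _
        have step2 : ∀ ε : ℝ, 0 < ε → E h ≤ eadd L (ε : EReal) := by
          intro ε hε
          have hev : ∀ y, ∀ᶠ n in atTop, h y ≤ eadd (fs n y) (ε : EReal) := by
            intro y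
            by_cases hy : f y = ⊤
            · have htop : Tendsto (fun n => fs n y) atTop (𝓝 ⊤) := hy ▸ hlim y
              filter_upwards [htop.eventually_const_le (EReal.coe_lt_top M)] with n hn
              have hhy : h y = (M : EReal) := min_eq_right (hy ▸ le_top)
              rw [hhy]
              exact le_trans hn (le_eadd_self' (by exact_mod_cast hε.le))
            · have hb : f y ≠ ⊥ := (lt_of_lt_of_le EReal.bot_lt_zero (hf0 y)).ne'
              set r := (f y).toReal with hrdef
              have hr : f y = (r : EReal) := (EReal.coe_toReal hy hb).symm
              have hlt : ((r - ε : ℝ) : EReal) < f y := by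
                rw [hr]; exact_mod_cast sub_lt_self r hε
              filter_upwards [(hlim y).eventually_const_le hlt] with n hn
              have h1' : h y ≤ (r : EReal) := le_trans (min_le_left _ _) hr.le
              refine le_trans h1' ?_
              by_cases hfn : fs n y = ⊤
              · simp [eadd, hfn]
              · have he : eadd (fs n y) (ε : EReal) = fs n y + (ε : EReal) := by
                  simp [eadd, hfn, EReal.coe_ne_top]
                rw [he]
                calc (r : EReal) = ((r - ε : ℝ) : EReal) + (ε : EReal) := by
                      rw [← EReal.coe_add]; norm_num
                  _ ≤ fs n y + (ε : EReal) := add_le_add_left hn _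
          obtain ⟨N, hN⟩ := (eventually_all.2 hev).exists
          calc E h ≤ E (fun y => eadd (fs N y) (ε : EReal)) :=
                h4 _ _ hhb ⟨0, fun y => le_trans (by simpa using h0 N y)
                  (le_eadd_self' (by exact_mod_cast hε.le))⟩ hN
            _ ≤ eadd (E (fs N)) (E fun _ => (ε : EReal)) :=
                h2 _ _ (hfs_b N) ⟨ε, fun y => le_refl _⟩
            _ = eadd (E (fs N)) (ε : EReal) := by rw [h1 ε]
            _ ≤ eadd L (ε : EReal) := eadd_le_eadd_left' _ (hLn N)
        refine le_trans step1 ?_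
        rcases eq_or_ne L ⊤ with hLt | hLt
        · rw [hLt]; exact le_top
        · have hLb : L ≠ ⊥ := (lt_of_lt_of_le EReal.bot_lt_zero hL0).ne'
          have hs : L = ((L.toReal : ℝ) : EReal) := (EReal.coe_toReal hLt hLb).symm
          refine EReal.le_of_forall_lt_iff_le.1 fun z hz => ?_
          have hsz : L.toReal < z := by rw [hs] at hz; exact_mod_cast hz
          have hst := step2 (z - L.toReal) (sub_pos.2 hsz)
          have heq2 : eadd L ((z - L.toReal : ℝ) : EReal) = (z : EReal) := by
            rw [hs]
            simp only [eadd, EReal.coe_ne_top, or_self, if_false]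
            rw [← EReal.coe_add]; norm_num
          rwa [heq2] at hst
      · -- 0 < E g case
        have hEg1 : E g ≤ 1 := by
          have h := h4 g (fun _ => ((1 : ℝ) : EReal)) hgb ⟨1, fun y => le_refl _⟩
            (fun y => by by_cases hy : f y = ⊤ <;> simp [hgdef, hy])
          rwa [h1 1, EReal.coe_one] at h
        have h1top : (1 : EReal) < ⊤ := by
          rw [← EReal.coe_one]; exact EReal.coe_lt_top 1
        have hgt : E g ≠ ⊤ := fun e => absurd hEg1 (by rw [e]; exact not_le.2 h1top)
        have hgbot : E g ≠ ⊥ := (lt_of_le_of_lt bot_le hpos).ne'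
        have hEgr : E g = ((E g).toReal : EReal) := (EReal.coe_toReal hgt hgbot).symm
        set r := (E g).toReal with hrdef
        have hr0 : 0 < r := by
          have := hpos; rw [hEgr] at this; exact_mod_cast this
        have hLtop : L = ⊤ := by
          have hcle : ∀ c : ℝ, 0 < c → (c : EReal) ≤ L := by
            intro c hc
            set l := c / r with hldef
            have hl0 : 0 < l := div_pos hc hr0
            have hev : ∀ y, ∀ᶠ n in atTop, (l : EReal) * g y ≤ fs n y := by
              intro y
              by_cases hy : f y = ⊤
              · have htop : Tendsto (fun n => fs n y) atTop (𝓝 ⊤) := hy ▸ hlim y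
                filter_upwards [htop.eventually_const_le (EReal.coe_lt_top l)] with n hn
                have : g y = 1 := if_pos hy
                rw [this, mul_one]; exact hn
              · have : g y = 0 := if_neg hy
                rw [this, mul_zero]; exact Eventually.of_forall fun n => h0 n y
            obtain ⟨N, hN⟩ := (eventually_all.2 hev).exists
            have h3' := h3 l hl0 g hgb
            have hc' : (c : EReal) = (l : EReal) * E g := by
              rw [hEgr, ← EReal.coe_mul]
              exact_mod_cast (div_mul_cancel₀ c hr0.ne').symm
            rw [hc', ← h3']
            exact le_trans (h4 _ _ ⟨0, fun y => by
              simpa using mul_nonneg (by exact_mod_cast hl0.le) (hg0 y)⟩ (hfs_b N) hN) (hLn N)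
          rw [EReal.eq_top_iff_forall_lt]
          intro c
          calc (c : EReal) < ((max c 0 + 1 : ℝ) : EReal) := by
                exact_mod_cast lt_of_le_of_lt (le_max_left c 0) (lt_add_one _)
            _ ≤ L := hcle _ (by positivity)
        rw [hLtop]; exact le_top
    have hEfL : E f = L := le_antisymm key (iSup_le fun n => h4 _ _ (hfs_b n) hf_b (hle n))
    rw [hEfL, hLdef]
    exact tendsto_atTop_iSup hEmono
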